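/- Uniqueness: if a value φ (a map from partition-function games to ℝ^N) satisfies Efficiency, Symmetry, Additivity, and the Null-Player Axiom with respect to α-marginality, then φ = φ^α; i.e., these four axioms determine a unique value on partition-function games. -/

import Mathlib

open Finset

open scoped Classical

/-- A partition of the player set `Fin n`; following the paper's convention,
`∅` is a member of every partition. -/
def IsPartition {n : ℕ} (P : Finset (Finset (Fin n))) : Prop :=
  ∅ ∈ P ∧ ∀ a : Fin n, ∃! B : Finset (Fin n), B ∈ P ∧ a ∈ B

/-- The set `𝒫` of all partitions of `Fin n`. -/
noncomputable def allPartitions (n : ℕ) : Finset (Finset (Finset (Fin n))) :=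
  Finset.univ.filter IsPartition

/-- `C_i^π`: the set of players appearing after `i` in the ordering `π`. -/
def Cafter {n : ℕ} (π : Equiv.Perm (Fin n)) (i : Fin n) : Finset (Fin n) :=
  Finset.univ.filter fun j => π.symm i < π.symm j

/-- `P_{[S]}` : the partition obtained from `P` by merging all members of `S`
into a single coalition. -/
def pmerge {n : ℕ} (P : Finset (Finset (Fin n))) (S : Finset (Fin n)) :
    Finset (Finset (Fin n)) :=
  P.image (· \ S) ∪ {S}

/-- `τ_i^T(P)` : the partition obtained from `P` by transferring `i` from its
coalition to the coalition `T` (taking `T = ∅` means that `i` forms a new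
singleton coalition). -/
def moveTo {n : ℕ} (P : Finset (Finset (Fin n))) (i : Fin n) (T : Finset (Fin n)) :
    Finset (Finset (Fin n)) :=
  ((P.erase T).image fun B => B.erase i) ∪ {insert i T} ∪ {∅}

/-- A partition-function game: a real value for every (embedded) coalition. -/
abbrev Game (n : ℕ) := Finset (Fin n) → Finset (Finset (Fin n)) → ℝ

/-- A system of weights `α_i(S, P)` (meaningful for `i ∉ S`). -/
abbrev Weights (n : ℕ) := Fin n → Finset (Fin n) → Finset (Finset (Fin n)) → ℝ

/-- The partition `{N, ∅}` in which the grand coalition is embedded. -/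
def grandPart (n : ℕ) : Finset (Finset (Fin n)) := {Finset.univ, ∅}

/-- Normalization: for every embedded coalition `(S, P)` with `i ∈ S`,
`∑_{T ∈ P_{−S}} α_i(S_{−i}, τ_i^T(P)) = 1`. -/
def Normalized {n : ℕ} (w : Weights n) : Prop :=
  ∀ (i : Fin n) (S : Finset (Fin n)) (P : Finset (Finset (Fin n))),
    IsPartition P → S ∈ P → i ∈ S →
      ∑ T ∈ P.erase S, w i (S.erase i) (moveTo P i T) = 1

/-- Weights take values in `[0, 1]`. -/
def InRange {n : ℕ} (w : Weights n) : Prop :=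
  ∀ (i : Fin n) (S : Finset (Fin n)) (P : Finset (Finset (Fin n))),
    i ∉ S → 0 ≤ w i S P ∧ w i S P ≤ 1

/-- `pr^α_π(P) = ∏_{i ∈ N} α_i(C_i^π, P_{[C_i^π]})`. -/
noncomputable def pr {n : ℕ} (w : Weights n) (π : Equiv.Perm (Fin n))
    (P : Finset (Finset (Fin n))) : ℝ :=
  ∏ i : Fin n, w i (Cafter π i) (pmerge P (Cafter π i))

/-- The extended Shapley value `φ^α` (formula (1) of the paper). -/
noncomputable def esv {n : ℕ} (w : Weights n) (v : Game n) (i : Fin n) : ℝ :=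
  ((n.factorial : ℝ))⁻¹ * ∑ π : Equiv.Perm (Fin n), ∑ P ∈ allPartitions n,
    pr w π P *
      (v (insert i (Cafter π i)) (pmerge P (insert i (Cafter π i))) -
        v (Cafter π i) (pmerge P (Cafter π i)))

/-- The `α`-marginal contribution `[mc^α_i(v)](S, P)`. -/
noncomputable def mc {n : ℕ} (w : Weights n) (v : Game n) (i : Fin n)
    (S : Finset (Fin n)) (P : Finset (Finset (Fin n))) : ℝ :=
  ∑ T ∈ P.erase S, w i (S.erase i) (moveTo P i T) * (v S P - v (S.erase i) (moveTo P i T))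

/-- A genuine partition-function game: it vanishes off embedded coalitions
(and on the empty coalition). -/
def IsGame {n : ℕ} (v : Game n) : Prop :=
  ∀ S P, ¬ (IsPartition P ∧ S ∈ P ∧ S ≠ ∅) → v S P = 0

/-- The simple game `e^{(S₀, P₀)}`. -/
noncomputable def sgame {n : ℕ} (S₀ : Finset (Fin n)) (P₀ : Finset (Finset (Fin n))) :
    Game n :=
  fun S P => if S = S₀ ∧ P = P₀ then 1 else 0

/-- The permuted game `π(v)`, with `π(v)(S, P) = v(π(S), π(P))`. -/
def permGame {n : ℕ} (π : Equiv.Perm (Fin n)) (v : Game n) : Game n :=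
  fun S P => v (S.image π) (P.image (Finset.image π))

section PartA

variable {n : ℕ}

lemma IsPartition.unique {P : Finset (Finset (Fin n))} (hP : IsPartition P)
    {B B' : Finset (Fin n)} {a : Fin n} (hB : B ∈ P) (hB' : B' ∈ P)
    (ha : a ∈ B) (ha' : a ∈ B') : B = B' := by
  obtain ⟨C, -, hC⟩ := hP.2 a
  rw [hC B ⟨hB, ha⟩, hC B' ⟨hB', ha'⟩]

lemma IsPartition.exists_block {P : Finset (Finset (Fin n))} (hP : IsPartition P)
    (a : Fin n) : ∃ B, B ∈ P ∧ a ∈ B := by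
  obtain ⟨B, hB, -⟩ := hP.2 a; exact ⟨B, hB.1, hB.2⟩

lemma mem_pmerge_self (P : Finset (Finset (Fin n))) (D : Finset (Fin n)) :
    D ∈ pmerge P D := by simp [pmerge]

lemma sdiff_mem_pmerge {P : Finset (Finset (Fin n))} {B : Finset (Fin n)}
    (hB : B ∈ P) (D : Finset (Fin n)) : B \ D ∈ pmerge P D := by
  simp only [pmerge, Finset.mem_union, Finset.mem_image]
  exact Or.inl ⟨B, hB, rfl⟩

lemma empty_mem_pmerge {P : Finset (Finset (Fin n))} (h : ∅ ∈ P) (D : Finset (Fin n)) :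
    (∅ : Finset (Fin n)) ∈ pmerge P D := by
  have := sdiff_mem_pmerge h D; simpa using this

lemma isPartition_pmerge {P : Finset (Finset (Fin n))} (hP : IsPartition P)
    (D : Finset (Fin n)) : IsPartition (pmerge P D) := by
  refine ⟨empty_mem_pmerge hP.1 D, fun a => ?_⟩
  by_cases haD : a ∈ D
  · refine ⟨D, ⟨mem_pmerge_self P D, haD⟩, ?_⟩
    rintro X ⟨hX, haX⟩
    rcases Finset.mem_union.1 hX with hX | hX
    · obtain ⟨B, -, rfl⟩ := Finset.mem_image.1 hX
      exact absurd (Finset.mem_sdiff.1 haX).2 (by simp [haD])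
    · simpa using hX
  · obtain ⟨B, hB, haB⟩ := hP.exists_block a
    refine ⟨B \ D, ⟨sdiff_mem_pmerge hB D, Finset.mem_sdiff.2 ⟨haB, haD⟩⟩, ?_⟩
    rintro X ⟨hX, haX⟩
    rcases Finset.mem_union.1 hX with hX | hX
    · obtain ⟨B', hB', rfl⟩ := Finset.mem_image.1 hX
      rw [hP.unique hB' hB (Finset.mem_sdiff.1 haX).1 haB]
    · exact absurd (Finset.mem_singleton.1 hX ▸ haX) (by simpa using haD)

lemma pmerge_empty {P : Finset (Finset (Fin n))} (h : ∅ ∈ P) :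
    pmerge P (∅ : Finset (Fin n)) = P := by
  ext X
  simp only [pmerge, Finset.mem_union, Finset.mem_image, Finset.sdiff_empty,
    Finset.mem_singleton]
  constructor
  · rintro (⟨B, hB, rfl⟩ | rfl) <;> assumption
  · intro hX; exact Or.inl ⟨X, hX, rfl⟩

lemma pmerge_univ {P : Finset (Finset (Fin n))} (h : ∅ ∈ P) :
    pmerge P (Finset.univ : Finset (Fin n)) = grandPart n := by
  ext X
  simp only [pmerge, grandPart, Finset.mem_union, Finset.mem_image,
    Finset.mem_singleton, Finset.mem_insert]
  constructor
  · rintro (⟨B, hB, rfl⟩ | rfl)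
    · right; simp
    · left; rfl
  · rintro (rfl | rfl)
    · exact Or.inr rfl
    · exact Or.inl ⟨∅, h, by simp⟩

lemma sdiff_sdiff_of_subset' {B D D' : Finset (Fin n)} (hDD : D ⊆ D') :
    (B \ D) \ D' = B \ D' := by
  ext a; simp only [Finset.mem_sdiff]
  constructor
  · rintro ⟨⟨hB, -⟩, hD'⟩; exact ⟨hB, hD'⟩
  · rintro ⟨hB, hD'⟩; exact ⟨⟨hB, fun hD => hD' (hDD hD)⟩, hD'⟩

lemma pmerge_pmerge {P : Finset (Finset (Fin n))} (h : ∅ ∈ P)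
    {D D' : Finset (Fin n)} (hDD : D ⊆ D') :
    pmerge (pmerge P D) D' = pmerge P D' := by
  ext X
  simp only [pmerge, Finset.mem_union, Finset.mem_image, Finset.mem_singleton]
  constructor
  · rintro (⟨B, hB, rfl⟩ | rfl)
    · rcases hB with (⟨B', hB', rfl⟩ | rfl)
      · exact Or.inl ⟨B', hB', (sdiff_sdiff_of_subset' hDD).symm⟩
      · exact Or.inl ⟨∅, h, by simp [Finset.sdiff_eq_empty_iff_subset.2 hDD]⟩
    · exact Or.inr rfl
  · rintro (⟨B, hB, rfl⟩ | rfl)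
    · exact Or.inl ⟨B \ D, Or.inl ⟨B, hB, rfl⟩, sdiff_sdiff_of_subset' hDD⟩
    · exact Or.inr rfl

end PartA
section PartB

variable {n : ℕ}

lemma notMem_of_ne_block {Q : Finset (Finset (Fin n))} (hQ : IsPartition Q)
    {S T : Finset (Fin n)} {i : Fin n} (hS : S ∈ Q) (hi : i ∈ S)
    (hT : T ∈ Q) (hne : T ≠ S) : i ∉ T :=
  fun hiT => hne (hQ.unique hT hS hiT hi)

lemma mem_moveTo_iff {Q : Finset (Finset (Fin n))} {i : Fin n}
    {T X : Finset (Fin n)} :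
    X ∈ moveTo Q i T ↔ (∃ B ∈ Q.erase T, B.erase i = X) ∨ X = insert i T ∨ X = ∅ := by
  simp only [moveTo, Finset.mem_union, Finset.mem_image, Finset.mem_singleton, or_assoc]

lemma insert_mem_moveTo (Q : Finset (Finset (Fin n))) (i : Fin n) (T : Finset (Fin n)) :
    insert i T ∈ moveTo Q i T := mem_moveTo_iff.2 (Or.inr (Or.inl rfl))

lemma empty_mem_moveTo (Q : Finset (Finset (Fin n))) (i : Fin n) (T : Finset (Fin n)) :
    (∅ : Finset (Fin n)) ∈ moveTo Q i T := mem_moveTo_iff.2 (Or.inr (Or.inr rfl))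

lemma erase_mem_moveTo {Q : Finset (Finset (Fin n))} {S T : Finset (Fin n)}
    (hS : S ∈ Q) (hne : S ≠ T) (i : Fin n) :
    S.erase i ∈ moveTo Q i T :=
  mem_moveTo_iff.2 (Or.inl ⟨S, Finset.mem_erase.2 ⟨hne, hS⟩, rfl⟩)

lemma mem_moveTo_of_mem_i {Q : Finset (Finset (Fin n))} {i : Fin n}
    {T X : Finset (Fin n)} (hX : X ∈ moveTo Q i T) (hiX : i ∈ X) :
    X = insert i T := by
  rcases mem_moveTo_iff.1 hX with (⟨B, -, rfl⟩ | rfl | rfl)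
  · exact absurd hiX (Finset.notMem_erase i B)
  · rfl
  · exact absurd hiX (Finset.notMem_empty i)

lemma moveTo_right_injective {Q : Finset (Finset (Fin n))} {i : Fin n}
    {T T' : Finset (Fin n)} (hT : i ∉ T) (hT' : i ∉ T')
    (h : moveTo Q i T = moveTo Q i T') : T = T' := by
  have h1 : insert i T ∈ moveTo Q i T' := h ▸ insert_mem_moveTo Q i T
  have h2 := mem_moveTo_of_mem_i h1 (Finset.mem_insert_self i T)
  have : (insert i T).erase i = (insert i T').erase i := by rw [h2]
  rwa [Finset.erase_insert hT, Finset.erase_insert hT'] at this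

lemma isPartition_moveTo {Q : Finset (Finset (Fin n))} (hQ : IsPartition Q)
    {S T : Finset (Fin n)} {i : Fin n} (hS : S ∈ Q) (hi : i ∈ S)
    (hT : T ∈ Q.erase S) : IsPartition (moveTo Q i T) := by
  obtain ⟨hTne, hTQ⟩ := Finset.mem_erase.1 hT
  refine ⟨empty_mem_moveTo Q i T, fun a => ?_⟩
  by_cases hai : a = i
  · subst hai
    exact ⟨insert a T, ⟨insert_mem_moveTo Q a T, Finset.mem_insert_self a T⟩,
      fun X ⟨hX, haX⟩ => mem_moveTo_of_mem_i hX haX⟩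
  · obtain ⟨B, hB, haB⟩ := hQ.exists_block a
    by_cases hBT : B = T
    · subst hBT
      refine ⟨insert i B, ⟨insert_mem_moveTo Q i B, Finset.mem_insert_of_mem haB⟩, ?_⟩
      rintro X ⟨hX, haX⟩
      rcases mem_moveTo_iff.1 hX with (⟨B', hB', rfl⟩ | rfl | rfl)
      · obtain ⟨hB'ne, hB'Q⟩ := Finset.mem_erase.1 hB'
        exact absurd (hQ.unique hB'Q hB (Finset.mem_of_mem_erase haX) haB) hB'ne
      · rfl
      · exact absurd haX (Finset.notMem_empty a)
    · refine ⟨B.erase i, ⟨erase_mem_moveTo hB hBT i, Finset.mem_erase.2 ⟨hai, haB⟩⟩, ?_⟩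
      rintro X ⟨hX, haX⟩
      rcases mem_moveTo_iff.1 hX with (⟨B', hB', rfl⟩ | rfl | rfl)
      · obtain ⟨hB'ne, hB'Q⟩ := Finset.mem_erase.1 hB'
        rw [hQ.unique hB'Q hB (Finset.mem_of_mem_erase haX) haB]
      · exact absurd (hQ.unique hB hTQ haB (Finset.mem_of_mem_insert_of_ne haX hai)) hBT
      · exact absurd haX (Finset.notMem_empty a)

end PartB
section PartC

variable {n : ℕ}

lemma sdiff_erase_of_mem {B D : Finset (Fin n)} {i : Fin n} (hiB : i ∈ B) (hiD : i ∈ D) :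
    B \ D.erase i = insert i (B \ D) := by
  ext a
  simp only [Finset.mem_sdiff, Finset.mem_erase, Finset.mem_insert]
  constructor
  · rintro ⟨haB, hnot⟩
    by_cases hai : a = i
    · exact Or.inl hai
    · exact Or.inr ⟨haB, fun haD => hnot ⟨hai, haD⟩⟩
  · rintro (rfl | ⟨haB, haD⟩)
    · exact ⟨hiB, fun h => h.1 rfl⟩
    · exact ⟨haB, fun h => haD h.2⟩

lemma sdiff_erase_of_not_mem {B D : Finset (Fin n)} {i : Fin n} (hiB : i ∉ B) :
    B \ D.erase i = B \ D := by
  ext a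
  simp only [Finset.mem_sdiff, Finset.mem_erase]
  constructor
  · rintro ⟨haB, hnot⟩
    refine ⟨haB, fun haD => hnot ⟨fun hai => hiB (hai ▸ haB), haD⟩⟩
  · rintro ⟨haB, haD⟩
    exact ⟨haB, fun h => haD h.2⟩

/-- The key forward lemma: removing `i` from the merged coalition `D` corresponds to a
`moveTo` on the merged partition. -/
lemma pmerge_erase_eq_moveTo {P : Finset (Finset (Fin n))} (hP : IsPartition P)
    {D B : Finset (Fin n)} {i : Fin n} (hiD : i ∈ D) (hB : B ∈ P) (hiB : i ∈ B) :
    pmerge P (D.erase i) = moveTo (pmerge P D) i (B \ D) := by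
  ext X
  constructor
  · intro hX
    rcases Finset.mem_union.1 hX with hX | hX
    · obtain ⟨B', hB', rfl⟩ := Finset.mem_image.1 hX
      by_cases hiB' : i ∈ B'
      · have : B' = B := hP.unique hB' hB hiB' hiB
        subst this
        rw [sdiff_erase_of_mem hiB' hiD]
        exact insert_mem_moveTo _ _ _
      · rw [sdiff_erase_of_not_mem hiB']
        by_cases hBT : B' \ D = B \ D
        · -- collision case: then B' \ D = ∅
          have hempty : B' \ D = ∅ := by
            by_contra hne
            obtain ⟨a, ha⟩ := Finset.nonempty_iff_ne_empty.2 hne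
            have ha' : a ∈ B \ D := hBT ▸ ha
            have : B' = B := hP.unique hB' hB (Finset.mem_sdiff.1 ha).1 (Finset.mem_sdiff.1 ha').1
            exact hiB' (this ▸ hiB)
          rw [hempty]
          exact empty_mem_moveTo _ _ _
        · have hmem : B' \ D ∈ (pmerge P D).erase (B \ D) :=
            Finset.mem_erase.2 ⟨hBT, sdiff_mem_pmerge hB' D⟩
          have : (B' \ D).erase i = B' \ D :=
            Finset.erase_eq_of_notMem (fun h => (Finset.mem_sdiff.1 h).2 hiD)
          exact mem_moveTo_iff.2 (Or.inl ⟨B' \ D, hmem, this⟩)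
    · -- X = D.erase i
      have hX' : X = D.erase i := Finset.mem_singleton.1 hX
      subst hX'
      have hD : D ∈ (pmerge P D).erase (B \ D) := by
        refine Finset.mem_erase.2 ⟨fun h => ?_, mem_pmerge_self P D⟩
        have h2 : i ∈ B \ D := h ▸ hiD
        exact (Finset.mem_sdiff.1 h2).2 hiD
      exact mem_moveTo_iff.2 (Or.inl ⟨D, hD, rfl⟩)
  · intro hX
    rcases mem_moveTo_iff.1 hX with (⟨Y, hY, rfl⟩ | rfl | rfl)
    · obtain ⟨hYne, hYQ⟩ := Finset.mem_erase.1 hY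
      rcases Finset.mem_union.1 hYQ with hY' | hY'
      · obtain ⟨B', hB', rfl⟩ := Finset.mem_image.1 hY'
        have hiY : i ∉ B' \ D := fun h => (Finset.mem_sdiff.1 h).2 hiD
        rw [Finset.erase_eq_of_notMem hiY]
        have hiB' : i ∉ B' := by
          intro h
          exact hYne (by rw [hP.unique hB' hB h hiB])
        rw [← sdiff_erase_of_not_mem (D := D) hiB']
        exact Finset.mem_union.2 (Or.inl (Finset.mem_image.2 ⟨B', hB', rfl⟩))
      · rw [Finset.mem_singleton.1 hY']
        exact Finset.mem_union.2 (Or.inr (Finset.mem_singleton.2 rfl))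
    · rw [← sdiff_erase_of_mem hiB hiD]
      exact Finset.mem_union.2 (Or.inl (Finset.mem_image.2 ⟨B, hB, rfl⟩))
    · have : (∅ : Finset (Fin n)) ∈ P := hP.1
      exact Finset.mem_union.2 (Or.inl (Finset.mem_image.2 ⟨∅, this, by simp⟩))

/-- The backward lemma: merging back recovers the original partition. -/
lemma pmerge_moveTo {Q : Finset (Finset (Fin n))} (hQ : IsPartition Q)
    {S T : Finset (Fin n)} {i : Fin n} (hS : S ∈ Q) (hi : i ∈ S)
    (hT : T ∈ Q.erase S) : pmerge (moveTo Q i T) S = Q := by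
  obtain ⟨hTne, hTQ⟩ := Finset.mem_erase.1 hT
  have hiT : i ∉ T := notMem_of_ne_block hQ hS hi hTQ hTne
  have hdisj : ∀ B ∈ Q, B ≠ S → B \ S = B := by
    intro B hB hne
    apply Finset.sdiff_eq_self_of_disjoint
    rw [Finset.disjoint_left]
    intro a haB haS
    exact hne (hQ.unique hB hS haB haS)
  ext X
  constructor
  · intro hX
    rcases Finset.mem_union.1 hX with hX | hX
    · obtain ⟨Y, hY, rfl⟩ := Finset.mem_image.1 hX
      rcases mem_moveTo_iff.1 hY with (⟨B, hB, rfl⟩ | rfl | rfl)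
      · obtain ⟨hBne, hBQ⟩ := Finset.mem_erase.1 hB
        by_cases hBS : B = S
        · subst hBS
          have : (B.erase i) \ B = ∅ := by
            apply Finset.sdiff_eq_empty_iff_subset.2 (Finset.erase_subset i B)
          rw [this]; exact hQ.1
        · have hiB : i ∉ B := notMem_of_ne_block hQ hS hi hBQ hBS
          rw [Finset.erase_eq_of_notMem hiB, hdisj B hBQ hBS]
          exact hBQ
      · have : (insert i T) \ S = T := by
          ext a
          simp only [Finset.mem_sdiff, Finset.mem_insert]
          constructor
          · rintro ⟨(rfl | haT), haS⟩
            · exact absurd hi haS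
            · exact haT
          · intro haT
            refine ⟨Or.inr haT, fun haS => ?_⟩
            exact hTne (hQ.unique hTQ hS haT haS)
        rw [this]; exact hTQ
      · simpa using hQ.1
    · rw [Finset.mem_singleton.1 hX]; exact hS
  · intro hX
    by_cases hXS : X = S
    · subst hXS; exact Finset.mem_union.2 (Or.inr (Finset.mem_singleton.2 rfl))
    by_cases hXT : X = T
    · refine Finset.mem_union.2 (Or.inl (Finset.mem_image.2
        ⟨insert i T, insert_mem_moveTo _ _ _, ?_⟩))
      subst hXT
      ext a
      simp only [Finset.mem_sdiff, Finset.mem_insert]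
      constructor
      · rintro ⟨(rfl | haX), haS⟩
        · exact absurd hi haS
        · exact haX
      · intro haX
        exact ⟨Or.inr haX, fun haS => hTne (hQ.unique hTQ hS haX haS)⟩
    · have hiX : i ∉ X := notMem_of_ne_block hQ hS hi hX hXS
      refine Finset.mem_union.2 (Or.inl (Finset.mem_image.2
        ⟨X.erase i, erase_mem_moveTo hX hXT i, ?_⟩))
      rw [Finset.erase_eq_of_notMem hiX, hdisj X hX hXS]

end PartC
section PartD

variable {n : ℕ}

/-- The set of players at position `≥ k` in the order `σ`. -/
def Dseq (σ : Equiv.Perm (Fin n)) (k : ℕ) : Finset (Fin n) :=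
  Finset.univ.filter fun j => k ≤ (σ.symm j : ℕ)

lemma Dseq_zero (σ : Equiv.Perm (Fin n)) : Dseq σ 0 = Finset.univ := by
  simp [Dseq]

lemma Dseq_n (σ : Equiv.Perm (Fin n)) : Dseq σ n = ∅ := by
  ext j; simp [Dseq, Fin.is_lt, Nat.not_le.2 (Fin.is_lt _)]

lemma Dseq_anti (σ : Equiv.Perm (Fin n)) {k m : ℕ} (h : k ≤ m) :
    Dseq σ m ⊆ Dseq σ k := by
  intro j hj
  simp only [Dseq, Finset.mem_filter, Finset.mem_univ, true_and] at *
  omega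

lemma mem_Dseq_self {σ : Equiv.Perm (Fin n)} {k : ℕ} (hk : k < n) :
    σ ⟨k, hk⟩ ∈ Dseq σ k := by
  simp [Dseq]

lemma Dseq_succ {σ : Equiv.Perm (Fin n)} {k : ℕ} (hk : k < n) :
    Dseq σ (k + 1) = (Dseq σ k).erase (σ ⟨k, hk⟩) := by
  ext j
  simp only [Dseq, Finset.mem_filter, Finset.mem_univ, true_and, Finset.mem_erase]
  constructor
  · intro h
    refine ⟨fun he => ?_, by omega⟩
    rw [he] at h; simp at h
  · rintro ⟨hne, h⟩
    rcases Nat.lt_or_ge k (σ.symm j : ℕ) with h' | h'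
    · omega
    · exfalso
      apply hne
      have : (σ.symm j : ℕ) = k := le_antisymm h' h
      have : σ.symm j = ⟨k, hk⟩ := Fin.ext this
      rw [← this, Equiv.apply_symm_apply]

lemma Cafter_eq_Dseq (σ : Equiv.Perm (Fin n)) (i : Fin n) :
    Cafter σ i = Dseq σ ((σ.symm i : ℕ) + 1) := by
  ext j
  simp only [Cafter, Dseq, Finset.mem_filter, Finset.mem_univ, true_and, Fin.lt_def]
  omega

lemma insert_Cafter_eq_Dseq (σ : Equiv.Perm (Fin n)) (i : Fin n) :
    insert i (Cafter σ i) = Dseq σ (σ.symm i : ℕ) := by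
  ext j
  simp only [Cafter, Dseq, Finset.mem_insert, Finset.mem_filter, Finset.mem_univ,
    true_and, Fin.lt_def]
  constructor
  · rintro (rfl | h)
    · omega
    · omega
  · intro h
    rcases Nat.eq_or_lt_of_le h with h' | h'
    · left
      have : σ.symm i = σ.symm j := Fin.ext h'
      have := congrArg σ this
      simpa [Equiv.apply_symm_apply] using this.symm
    · right; omega

lemma mem_allPartitions {P : Finset (Finset (Fin n))} :
    P ∈ allPartitions n ↔ IsPartition P := by
  simp [allPartitions]

/-- Step weight function, as a function of the position `m : ℕ`. -/
noncomputable def fstep (w : Weights n) (σ : Equiv.Perm (Fin n))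
    (P : Finset (Finset (Fin n))) (m : ℕ) : ℝ :=
  if h : m < n then
    w (σ ⟨m, h⟩) (Dseq σ (m + 1)) (pmerge P (Dseq σ (m + 1)))
  else 1

lemma pr_eq_prod_fstep (w : Weights n) (σ : Equiv.Perm (Fin n))
    (P : Finset (Finset (Fin n))) :
    pr w σ P = ∏ m ∈ Finset.range n, fstep w σ P m := by
  rw [pr, ← Equiv.prod_comp σ]
  rw [← Fin.prod_univ_eq_prod_range (fstep w σ P)]
  apply Finset.prod_congr rfl
  intro k _
  have h1 : Cafter σ (σ k) = Dseq σ ((k : ℕ) + 1) := by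
    rw [Cafter_eq_Dseq]; simp
  rw [fstep, dif_pos k.is_lt, h1]

end PartD
section PartE

variable {n : ℕ}

lemma fiber_biUnion {σ : Equiv.Perm (Fin n)} {k : ℕ} (hk : k < n)
    {Q : Finset (Finset (Fin n))} (hQ : IsPartition Q) (hDQ : Dseq σ k ∈ Q) :
    ((allPartitions n).filter fun P => pmerge P (Dseq σ k) = Q) =
      (Q.erase (Dseq σ k)).biUnion fun T =>
        (allPartitions n).filter fun P =>
          pmerge P (Dseq σ (k + 1)) = moveTo Q (σ ⟨k, hk⟩) T := by
  ext P
  simp only [Finset.mem_biUnion, Finset.mem_filter, mem_allPartitions]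
  constructor
  · rintro ⟨hP, rfl⟩
    obtain ⟨B, hB, hiB⟩ := hP.exists_block (σ ⟨k, hk⟩)
    refine ⟨B \ Dseq σ k, ?_, hP, ?_⟩
    · refine Finset.mem_erase.2 ⟨?_, sdiff_mem_pmerge hB _⟩
      intro h
      have h2 : σ ⟨k, hk⟩ ∈ B \ Dseq σ k := h.symm ▸ mem_Dseq_self hk
      exact (Finset.mem_sdiff.1 h2).2 (mem_Dseq_self hk)
    · rw [Dseq_succ hk]
      exact pmerge_erase_eq_moveTo hP (mem_Dseq_self hk) hB hiB
  · rintro ⟨T, hT, hP, hmv⟩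
    refine ⟨hP, ?_⟩
    have h1 : Dseq σ (k + 1) ⊆ Dseq σ k := Dseq_anti σ (Nat.le_succ k)
    calc pmerge P (Dseq σ k)
        = pmerge (pmerge P (Dseq σ (k + 1))) (Dseq σ k) := (pmerge_pmerge hP.1 h1).symm
      _ = pmerge (moveTo Q (σ ⟨k, hk⟩) T) (Dseq σ k) := by rw [hmv]
      _ = Q := pmerge_moveTo hQ hDQ (mem_Dseq_self hk) hT

lemma fiber_pairwise_disjoint {σ : Equiv.Perm (Fin n)} {k : ℕ} (hk : k < n)
    {Q : Finset (Finset (Fin n))} (hQ : IsPartition Q) (hDQ : Dseq σ k ∈ Q) :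
    (↑(Q.erase (Dseq σ k)) : Set (Finset (Fin n))).PairwiseDisjoint fun T =>
      (allPartitions n).filter fun P =>
        pmerge P (Dseq σ (k + 1)) = moveTo Q (σ ⟨k, hk⟩) T := by
  intro T hT T' hT' hne
  simp only [Finset.mem_coe] at hT hT'
  simp only [Function.onFun]
  rw [Finset.disjoint_left]
  intro P hP hP'
  simp only [Finset.mem_filter] at hP hP'
  apply hne
  have hiT : σ ⟨k, hk⟩ ∉ T :=
    notMem_of_ne_block hQ hDQ (mem_Dseq_self hk) (Finset.mem_of_mem_erase hT)
      (Finset.mem_erase.1 hT).1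
  have hiT' : σ ⟨k, hk⟩ ∉ T' :=
    notMem_of_ne_block hQ hDQ (mem_Dseq_self hk) (Finset.mem_of_mem_erase hT')
      (Finset.mem_erase.1 hT').1
  exact moveTo_right_injective hiT hiT' (hP.2.symm.trans hP'.2)

/-- The tail of the process, summed over all partitions compatible with the current
state, has total weight 1. -/
lemma tail_sum (w : Weights n) (hnorm : Normalized w) (σ : Equiv.Perm (Fin n)) :
    ∀ d k, k + d = n → ∀ Q : Finset (Finset (Fin n)), IsPartition Q → Dseq σ k ∈ Q →
    ∑ P ∈ (allPartitions n).filter (fun P => pmerge P (Dseq σ k) = Q),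
      ∏ m ∈ Finset.Ico k n, fstep w σ P m = 1 := by
  intro d
  induction d with
  | zero =>
    intro k hkd Q hQ hDQ
    have hk' : k = n := by omega
    subst hk'
    have hfib : (allPartitions k).filter (fun P => pmerge P (Dseq σ k) = Q) = {Q} := by
      ext P
      simp only [Finset.mem_filter, mem_allPartitions, Finset.mem_singleton, Dseq_n]
      constructor
      · rintro ⟨hP, h⟩
        exact (pmerge_empty hP.1).symm.trans h
      · rintro rfl
        exact ⟨hQ, pmerge_empty hQ.1⟩
    rw [hfib, Finset.sum_singleton, Finset.Ico_self, Finset.prod_empty]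
  | succ d ih =>
    intro k hkd Q hQ hDQ
    have hk : k < n := by omega
    rw [fiber_biUnion hk hQ hDQ, Finset.sum_biUnion (fiber_pairwise_disjoint hk hQ hDQ)]
    have hstep : ∀ T ∈ Q.erase (Dseq σ k),
        (∑ P ∈ (allPartitions n).filter (fun P =>
            pmerge P (Dseq σ (k + 1)) = moveTo Q (σ ⟨k, hk⟩) T),
          ∏ m ∈ Finset.Ico k n, fstep w σ P m) =
        w (σ ⟨k, hk⟩) ((Dseq σ k).erase (σ ⟨k, hk⟩)) (moveTo Q (σ ⟨k, hk⟩) T) := by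
      intro T hT
      have hpart' : IsPartition (moveTo Q (σ ⟨k, hk⟩) T) :=
        isPartition_moveTo hQ hDQ (mem_Dseq_self hk) hT
      have hDmem : Dseq σ (k + 1) ∈ moveTo Q (σ ⟨k, hk⟩) T := by
        rw [Dseq_succ hk]
        exact erase_mem_moveTo hDQ (Ne.symm (Finset.mem_erase.1 hT).1) _
      have htail := ih (k + 1) (by omega) (moveTo Q (σ ⟨k, hk⟩) T) hpart' hDmem
      calc (∑ P ∈ (allPartitions n).filter (fun P =>
            pmerge P (Dseq σ (k + 1)) = moveTo Q (σ ⟨k, hk⟩) T),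
          ∏ m ∈ Finset.Ico k n, fstep w σ P m)
          = ∑ P ∈ (allPartitions n).filter (fun P =>
              pmerge P (Dseq σ (k + 1)) = moveTo Q (σ ⟨k, hk⟩) T),
            fstep w σ P k * ∏ m ∈ Finset.Ico (k + 1) n, fstep w σ P m :=
            Finset.sum_congr rfl (fun P _ => Finset.prod_eq_prod_Ico_succ_bot hk _)
        _ = ∑ P ∈ (allPartitions n).filter (fun P =>
              pmerge P (Dseq σ (k + 1)) = moveTo Q (σ ⟨k, hk⟩) T),
            w (σ ⟨k, hk⟩) (Dseq σ (k + 1)) (moveTo Q (σ ⟨k, hk⟩) T) *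
              ∏ m ∈ Finset.Ico (k + 1) n, fstep w σ P m := by
            apply Finset.sum_congr rfl
            intro P hP
            simp only [Finset.mem_filter] at hP
            rw [fstep, dif_pos hk, hP.2]
        _ = w (σ ⟨k, hk⟩) (Dseq σ (k + 1)) (moveTo Q (σ ⟨k, hk⟩) T) *
            ∑ P ∈ (allPartitions n).filter (fun P =>
              pmerge P (Dseq σ (k + 1)) = moveTo Q (σ ⟨k, hk⟩) T),
              ∏ m ∈ Finset.Ico (k + 1) n, fstep w σ P m := by
            rw [Finset.mul_sum]
        _ = w (σ ⟨k, hk⟩) ((Dseq σ k).erase (σ ⟨k, hk⟩)) (moveTo Q (σ ⟨k, hk⟩) T) := by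
            rw [htail, mul_one, Dseq_succ hk]
    rw [Finset.sum_congr rfl hstep]
    exact hnorm (σ ⟨k, hk⟩) (Dseq σ k) Q hQ hDQ (mem_Dseq_self hk)

end PartE
section PartF

variable {n : ℕ}

lemma isPartition_grandPart : IsPartition (grandPart n) := by
  constructor
  · simp [grandPart]
  · intro a
    refine ⟨Finset.univ, ⟨by simp [grandPart], Finset.mem_univ a⟩, ?_⟩
    rintro X ⟨hX, haX⟩
    rcases Finset.mem_insert.1 hX with rfl | hX
    · rfl
    · rw [Finset.mem_singleton.1 hX] at haX
      exact absurd haX (Finset.notMem_empty a)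

lemma univ_mem_grandPart : (Finset.univ : Finset (Fin n)) ∈ grandPart n := by
  simp [grandPart]

lemma sum_pr (w : Weights n) (hnorm : Normalized w) (σ : Equiv.Perm (Fin n)) :
    ∑ P ∈ allPartitions n, pr w σ P = 1 := by
  have h0 : Dseq σ 0 = (Finset.univ : Finset (Fin n)) := Dseq_zero σ
  have := tail_sum w hnorm σ n 0 (by omega) (grandPart n) isPartition_grandPart
    (by rw [h0]; exact univ_mem_grandPart)
  have hfib : (allPartitions n).filter (fun P => pmerge P (Dseq σ 0) = grandPart n)
      = allPartitions n := by
    apply Finset.filter_true_of_mem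
    intro P hP
    rw [h0]
    exact pmerge_univ (mem_allPartitions.1 hP).1
  rw [hfib] at this
  rw [← this]
  apply Finset.sum_congr rfl
  intro P _
  rw [pr_eq_prod_fstep, Finset.range_eq_Ico]

lemma telescope_sum (σ : Equiv.Perm (Fin n)) {P : Finset (Finset (Fin n))}
    (hP : ∅ ∈ P) {v : Game n} (hv : IsGame v) :
    ∑ i : Fin n, (v (insert i (Cafter σ i)) (pmerge P (insert i (Cafter σ i))) -
      v (Cafter σ i) (pmerge P (Cafter σ i))) = v Finset.univ (grandPart n) := by
  have hterm : ∀ i : Fin n,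
      (v (insert i (Cafter σ i)) (pmerge P (insert i (Cafter σ i))) -
        v (Cafter σ i) (pmerge P (Cafter σ i))) =
      (fun m => v (Dseq σ m) (pmerge P (Dseq σ m))) ((σ.symm i : ℕ)) -
      (fun m => v (Dseq σ m) (pmerge P (Dseq σ m))) ((σ.symm i : ℕ) + 1) := by
    intro i
    rw [insert_Cafter_eq_Dseq, Cafter_eq_Dseq]
  rw [Finset.sum_congr rfl (fun i _ => hterm i)]
  rw [← Equiv.sum_comp σ]
  simp only [Equiv.symm_apply_apply]
  rw [Fin.sum_univ_eq_sum_range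
    (fun m => (fun m => v (Dseq σ m) (pmerge P (Dseq σ m))) m -
      (fun m => v (Dseq σ m) (pmerge P (Dseq σ m))) (m + 1))]
  rw [Finset.sum_range_sub' (fun m => v (Dseq σ m) (pmerge P (Dseq σ m)))]
  rw [Dseq_zero, Dseq_n, pmerge_univ hP]
  have : v ∅ (pmerge P ∅) = 0 := hv _ _ (by simp)
  rw [this, sub_zero]

lemma esv_eff (w : Weights n) (hnorm : Normalized w) {v : Game n} (hv : IsGame v) :
    ∑ i : Fin n, esv w v i = v Finset.univ (grandPart n) := by
  unfold esv
  rw [← Finset.mul_sum]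
  rw [Finset.sum_comm]
  have hσ : ∀ σ : Equiv.Perm (Fin n), σ ∈ (Finset.univ : Finset (Equiv.Perm (Fin n))) →
      (∑ i : Fin n, ∑ P ∈ allPartitions n,
        pr w σ P * (v (insert i (Cafter σ i)) (pmerge P (insert i (Cafter σ i))) -
          v (Cafter σ i) (pmerge P (Cafter σ i)))) = v Finset.univ (grandPart n) := by
    intro σ _
    rw [Finset.sum_comm]
    have hP : ∀ P ∈ allPartitions n,
        (∑ i : Fin n, pr w σ P *
          (v (insert i (Cafter σ i)) (pmerge P (insert i (Cafter σ i))) -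
            v (Cafter σ i) (pmerge P (Cafter σ i)))) =
        pr w σ P * v Finset.univ (grandPart n) := by
      intro P hPmem
      rw [← Finset.mul_sum, telescope_sum σ (mem_allPartitions.1 hPmem).1 hv]
    rw [Finset.sum_congr rfl hP, ← Finset.sum_mul, sum_pr w hnorm σ, one_mul]
  rw [Finset.sum_congr rfl hσ, Finset.sum_const, Finset.card_univ, Fintype.card_perm,
    Fintype.card_fin, nsmul_eq_mul, ← mul_assoc, inv_mul_cancel₀, one_mul]
  exact_mod_cast Nat.factorial_ne_zero n

end PartF
section PartG

variable {n : ℕ}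

lemma step_sum (w : Weights n) (hnorm : Normalized w) (σ : Equiv.Perm (Fin n))
    {k : ℕ} (hk : k < n) {Q : Finset (Finset (Fin n))} (hQ : IsPartition Q)
    (hDQ : Dseq σ k ∈ Q) (G : Finset (Finset (Fin n)) → ℝ) :
    ∑ P ∈ (allPartitions n).filter (fun P => pmerge P (Dseq σ k) = Q),
      (∏ m ∈ Finset.Ico k n, fstep w σ P m) * G (pmerge P (Dseq σ (k + 1))) =
    ∑ T ∈ Q.erase (Dseq σ k),
      w (σ ⟨k, hk⟩) (Dseq σ (k + 1)) (moveTo Q (σ ⟨k, hk⟩) T) *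
        G (moveTo Q (σ ⟨k, hk⟩) T) := by
  rw [fiber_biUnion hk hQ hDQ, Finset.sum_biUnion (fiber_pairwise_disjoint hk hQ hDQ)]
  apply Finset.sum_congr rfl
  intro T hT
  have hpart' : IsPartition (moveTo Q (σ ⟨k, hk⟩) T) :=
    isPartition_moveTo hQ hDQ (mem_Dseq_self hk) hT
  have hDmem : Dseq σ (k + 1) ∈ moveTo Q (σ ⟨k, hk⟩) T := by
    rw [Dseq_succ hk]
    exact erase_mem_moveTo hDQ (Ne.symm (Finset.mem_erase.1 hT).1) _
  have htail := tail_sum w hnorm σ (n - (k + 1)) (k + 1) (by omega)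
    (moveTo Q (σ ⟨k, hk⟩) T) hpart' hDmem
  calc ∑ P ∈ (allPartitions n).filter (fun P =>
        pmerge P (Dseq σ (k + 1)) = moveTo Q (σ ⟨k, hk⟩) T),
      (∏ m ∈ Finset.Ico k n, fstep w σ P m) * G (pmerge P (Dseq σ (k + 1)))
      = ∑ P ∈ (allPartitions n).filter (fun P =>
          pmerge P (Dseq σ (k + 1)) = moveTo Q (σ ⟨k, hk⟩) T),
        (w (σ ⟨k, hk⟩) (Dseq σ (k + 1)) (moveTo Q (σ ⟨k, hk⟩) T) *
          G (moveTo Q (σ ⟨k, hk⟩) T)) * ∏ m ∈ Finset.Ico (k + 1) n, fstep w σ P m := by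
        apply Finset.sum_congr rfl
        intro P hP
        simp only [Finset.mem_filter] at hP
        rw [Finset.prod_eq_prod_Ico_succ_bot hk, fstep, dif_pos hk, hP.2]
        ring
    _ = (w (σ ⟨k, hk⟩) (Dseq σ (k + 1)) (moveTo Q (σ ⟨k, hk⟩) T) *
          G (moveTo Q (σ ⟨k, hk⟩) T)) *
        ∑ P ∈ (allPartitions n).filter (fun P =>
          pmerge P (Dseq σ (k + 1)) = moveTo Q (σ ⟨k, hk⟩) T),
          ∏ m ∈ Finset.Ico (k + 1) n, fstep w σ P m := by
        rw [Finset.mul_sum]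
    _ = w (σ ⟨k, hk⟩) (Dseq σ (k + 1)) (moveTo Q (σ ⟨k, hk⟩) T) *
          G (moveTo Q (σ ⟨k, hk⟩) T) := by
        rw [htail, mul_one]

lemma esv_null (w : Weights n) (hnorm : Normalized w) {v : Game n} {j : Fin n}
    (h0 : ∀ S P, IsPartition P → S ∈ P → j ∈ S → mc w v j S P = 0) :
    esv w v j = 0 := by
  unfold esv
  rw [Finset.sum_eq_zero, mul_zero]
  intro σ _
  set k : ℕ := (σ.symm j : ℕ) with hkdef
  have hk : k < n := (σ.symm j).is_lt
  have hjk : σ ⟨k, hk⟩ = j := by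
    have : (⟨k, hk⟩ : Fin n) = σ.symm j := by
      apply Fin.ext; simp [hkdef]
    rw [this, Equiv.apply_symm_apply]
  have hterm : ∀ P ∈ allPartitions n,
      pr w σ P * (v (insert j (Cafter σ j)) (pmerge P (insert j (Cafter σ j))) -
        v (Cafter σ j) (pmerge P (Cafter σ j))) =
      (∏ m ∈ Finset.Ico 0 k, fstep w σ P m) *
        ((∏ m ∈ Finset.Ico k n, fstep w σ P m) *
          (v (Dseq σ k) (pmerge P (Dseq σ k)) -
            v (Dseq σ (k + 1)) (pmerge P (Dseq σ (k + 1))))) := by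
    intro P _
    rw [insert_Cafter_eq_Dseq, Cafter_eq_Dseq, pr_eq_prod_fstep, Finset.range_eq_Ico,
      ← Finset.prod_Ico_consecutive _ (Nat.zero_le k) (le_of_lt hk)]
    ring
  rw [Finset.sum_congr rfl hterm]
  rw [← Finset.sum_fiberwise_of_maps_to
    (g := fun P => pmerge P (Dseq σ k)) (t := (allPartitions n).image fun P => pmerge P (Dseq σ k))
    (fun P hP => Finset.mem_image_of_mem _ hP)]
  apply Finset.sum_eq_zero
  intro Q hQmem
  obtain ⟨P₀, hP₀, rfl⟩ := Finset.mem_image.1 hQmem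
  set Q := pmerge P₀ (Dseq σ k) with hQdef
  have hQ : IsPartition Q := isPartition_pmerge (mem_allPartitions.1 hP₀) _
  have hDQ : Dseq σ k ∈ Q := mem_pmerge_self _ _
  have hhead : ∀ P ∈ (allPartitions n).filter (fun P => pmerge P (Dseq σ k) = Q),
      (∏ m ∈ Finset.Ico 0 k, fstep w σ P m) = ∏ m ∈ Finset.Ico 0 k,
        (if h : m < n then
          w (σ ⟨m, h⟩) (Dseq σ (m + 1)) (pmerge Q (Dseq σ (m + 1))) else 1) := by
    intro P hP
    simp only [Finset.mem_filter, mem_allPartitions] at hP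
    apply Finset.prod_congr rfl
    intro m hm
    have hmk : m + 1 ≤ k := (Finset.mem_Ico.1 hm).2
    have hsub : Dseq σ k ⊆ Dseq σ (m + 1) := Dseq_anti σ hmk
    have : pmerge P (Dseq σ (m + 1)) = pmerge Q (Dseq σ (m + 1)) := by
      rw [← hP.2, pmerge_pmerge hP.1.1 hsub]
    rw [fstep, this]
  have hfiber : ∑ P ∈ (allPartitions n).filter (fun P => pmerge P (Dseq σ k) = Q),
      (∏ m ∈ Finset.Ico 0 k, fstep w σ P m) *
        ((∏ m ∈ Finset.Ico k n, fstep w σ P m) *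
          (v (Dseq σ k) (pmerge P (Dseq σ k)) -
            v (Dseq σ (k + 1)) (pmerge P (Dseq σ (k + 1))))) =
      (∏ m ∈ Finset.Ico 0 k,
        (if h : m < n then
          w (σ ⟨m, h⟩) (Dseq σ (m + 1)) (pmerge Q (Dseq σ (m + 1))) else 1)) *
      ∑ P ∈ (allPartitions n).filter (fun P => pmerge P (Dseq σ k) = Q),
        (∏ m ∈ Finset.Ico k n, fstep w σ P m) *
          (v (Dseq σ k) Q - v (Dseq σ (k + 1)) (pmerge P (Dseq σ (k + 1)))) := by
    rw [Finset.mul_sum]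
    apply Finset.sum_congr rfl
    intro P hP
    have h2 := (Finset.mem_filter.1 hP).2
    rw [hhead P hP, h2]
  rw [hfiber]
  have hstep := step_sum w hnorm σ hk hQ hDQ
    (fun X => v (Dseq σ k) Q - v (Dseq σ (k + 1)) X)
  rw [hstep]
  have : ∑ T ∈ Q.erase (Dseq σ k),
      w (σ ⟨k, hk⟩) (Dseq σ (k + 1)) (moveTo Q (σ ⟨k, hk⟩) T) *
        (v (Dseq σ k) Q - v (Dseq σ (k + 1)) (moveTo Q (σ ⟨k, hk⟩) T)) =
      mc w v j (Dseq σ k) Q := by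
    unfold mc
    apply Finset.sum_congr rfl
    intro T _
    rw [← hjk, Dseq_succ hk]
  rw [this, h0 (Dseq σ k) Q hQ hDQ (by rw [← hjk]; exact mem_Dseq_self hk), mul_zero]

end PartG
section PartH

variable {n : ℕ}

lemma mem_image_perm {π : Equiv.Perm (Fin n)} {s : Finset (Fin n)} {j : Fin n} :
    j ∈ s.image π ↔ π.symm j ∈ s := by
  simp only [Finset.mem_image]
  constructor
  · rintro ⟨a, ha, rfl⟩; simpa
  · intro h; exact ⟨π.symm j, h, by simp⟩

lemma image_image_symm (π : Equiv.Perm (Fin n)) (P : Finset (Finset (Fin n))) :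
    (P.image (Finset.image π)).image (Finset.image π.symm) = P := by
  rw [Finset.image_image]
  have h : ∀ B ∈ P, (Finset.image π.symm ∘ Finset.image π) B = id B := by
    intro B _
    simp only [Function.comp_apply, Finset.image_image, id]
    have : (π.symm ∘ π) = id := by funext x; simp
    rw [this, Finset.image_id]
  rw [Finset.image_congr h, Finset.image_id]

lemma image_image_symm' (π : Equiv.Perm (Fin n)) (P : Finset (Finset (Fin n))) :
    (P.image (Finset.image π.symm)).image (Finset.image π) = P := by
  have := image_image_symm π.symm P
  simpa using this

lemma Cafter_mul (π σ : Equiv.Perm (Fin n)) (i : Fin n) :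
    Cafter (π * σ) (π i) = (Cafter σ i).image π := by
  ext j
  rw [mem_image_perm]
  simp only [Cafter, Finset.mem_filter, Finset.mem_univ, true_and]
  have h1 : (π * σ).symm (π i) = σ.symm i := by simp [Equiv.Perm.mul_def]
  have h2 : (π * σ).symm j = σ.symm (π.symm j) := by simp [Equiv.Perm.mul_def]
  rw [h1, h2]

lemma pmerge_image (π : Equiv.Perm (Fin n)) (P : Finset (Finset (Fin n)))
    (S : Finset (Fin n)) :
    pmerge (P.image (Finset.image π)) (S.image π) = (pmerge P S).image (Finset.image π) := by
  unfold pmerge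
  rw [Finset.image_union, Finset.image_singleton]
  congr 1
  rw [Finset.image_image, Finset.image_image]
  apply Finset.image_congr
  intro B _
  simp only [Function.comp_apply]
  exact (Finset.image_sdiff B S π.injective).symm

lemma isPartition_image {P : Finset (Finset (Fin n))} (hP : IsPartition P)
    (π : Equiv.Perm (Fin n)) : IsPartition (P.image (Finset.image π)) := by
  constructor
  · exact Finset.mem_image.2 ⟨∅, hP.1, by simp⟩
  · intro a
    obtain ⟨B, hB, haB⟩ := hP.exists_block (π.symm a)
    refine ⟨B.image π, ⟨Finset.mem_image_of_mem _ hB, mem_image_perm.2 (by simpa)⟩, ?_⟩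
    rintro X ⟨hX, haX⟩
    obtain ⟨B', hB', rfl⟩ := Finset.mem_image.1 hX
    have hb : π.symm a ∈ B' := mem_image_perm.1 haX
    rw [hP.unique hB' hB hb haB]

lemma pr_mul (w : Weights n)
    (hsym : ∀ (π : Equiv.Perm (Fin n)) (i : Fin n) S P, i ∉ S →
      w i S P = w (π i) (S.image π) (P.image (Finset.image π)))
    (π σ : Equiv.Perm (Fin n)) (P : Finset (Finset (Fin n))) :
    pr w (π * σ) (P.image (Finset.image π)) = pr w σ P := by
  unfold pr
  rw [← Equiv.prod_comp π (fun i => w i (Cafter (π * σ) i)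
    (pmerge (P.image (Finset.image π)) (Cafter (π * σ) i)))]
  apply Finset.prod_congr rfl
  intro i _
  rw [Cafter_mul, pmerge_image]
  have hi : i ∉ Cafter σ i := by simp [Cafter]
  exact (hsym π i (Cafter σ i) (pmerge P (Cafter σ i)) hi).symm

lemma esv_symm (w : Weights n)
    (hsym : ∀ (π : Equiv.Perm (Fin n)) (i : Fin n) S P, i ∉ S →
      w i S P = w (π i) (S.image π) (P.image (Finset.image π)))
    (π : Equiv.Perm (Fin n)) (v : Game n) (i : Fin n) :
    esv w (permGame π v) i = esv w v (π i) := by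
  unfold esv
  congr 1
  rw [← Equiv.sum_comp (Equiv.mulLeft π)
    (fun σ => ∑ P ∈ allPartitions n, pr w σ P *
      (v (insert (π i) (Cafter σ (π i))) (pmerge P (insert (π i) (Cafter σ (π i)))) -
        v (Cafter σ (π i)) (pmerge P (Cafter σ (π i)))))]
  apply Finset.sum_congr rfl
  intro σ _
  simp only [Equiv.coe_mulLeft]
  refine Finset.sum_bij' (fun P _ => P.image (Finset.image π))
    (fun P _ => P.image (Finset.image π.symm)) ?_ ?_ ?_ ?_ ?_
  · intro P hP
    exact mem_allPartitions.2 (isPartition_image (mem_allPartitions.1 hP) π)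
  · intro P hP
    exact mem_allPartitions.2 (isPartition_image (mem_allPartitions.1 hP) π.symm)
  · intro P hP
    exact image_image_symm π P
  · intro P hP
    exact image_image_symm' π P
  · intro P hP
    rw [pr_mul w hsym π σ P, Cafter_mul, ← Finset.image_insert, pmerge_image, pmerge_image]
    rfl

end PartH
section PartI

variable {n : ℕ}

lemma isGame_zero : IsGame (fun _ _ => (0 : ℝ) : Game n) := fun _ _ _ => rfl

lemma isGame_add {v u : Game n} (hv : IsGame v) (hu : IsGame u) :
    IsGame (fun S P => v S P + u S P) := by
  intro S P h; simp only []; rw [hv S P h, hu S P h, add_zero]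

lemma isGame_sub {v u : Game n} (hv : IsGame v) (hu : IsGame u) :
    IsGame (fun S P => v S P - u S P) := by
  intro S P h; simp only []; rw [hv S P h, hu S P h, sub_zero]

lemma isGame_smul (c : ℝ) {v : Game n} (hv : IsGame v) :
    IsGame (fun S P => c * v S P) := by
  intro S P h; simp only []; rw [hv S P h, mul_zero]

lemma isGame_sgame {S₀ : Finset (Fin n)} {P₀ : Finset (Finset (Fin n))}
    (h : IsPartition P₀) (hS : S₀ ∈ P₀) (hne : S₀ ≠ ∅) : IsGame (sgame S₀ P₀) := by
  intro S P hno
  unfold sgame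
  rw [if_neg]
  rintro ⟨rfl, rfl⟩
  exact hno ⟨h, hS, hne⟩

lemma isGame_sum {ι : Type*} (s : Finset ι) (g : ι → Game n)
    (hg : ∀ a ∈ s, IsGame (g a)) : IsGame (fun S P => ∑ a ∈ s, g a S P) := by
  intro S P h
  exact Finset.sum_eq_zero fun a ha => hg a ha S P h

lemma additive_sum (F : Game n → ℝ) (h0 : F (fun _ _ => 0) = 0)
    (hadd : ∀ v u : Game n, IsGame v → IsGame u →
      F (fun S P => v S P + u S P) = F v + F u)
    {ι : Type*} (s : Finset ι) (g : ι → Game n) (hg : ∀ a ∈ s, IsGame (g a)) :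
    F (fun S P => ∑ a ∈ s, g a S P) = ∑ a ∈ s, F (g a) := by
  induction s using Finset.induction_on with
  | empty => simpa using h0
  | insert a s ha ih =>
    have heq : (fun S P => ∑ b ∈ insert a s, g b S P) =
        (fun S P => g a S P + ∑ b ∈ s, g b S P) := by
      funext S P; rw [Finset.sum_insert ha]
    rw [heq, hadd _ _ (hg a (Finset.mem_insert_self a s))
      (isGame_sum s g (fun b hb => hg b (Finset.mem_insert_of_mem hb))),
      ih (fun b hb => hg b (Finset.mem_insert_of_mem hb)), Finset.sum_insert ha]

lemma esv_zero (w : Weights n) (i : Fin n) : esv w (fun _ _ => 0) i = 0 := by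
  unfold esv
  rw [Finset.sum_eq_zero, mul_zero]
  intro σ _
  exact Finset.sum_eq_zero fun P _ => by ring

lemma esv_add (w : Weights n) (v u : Game n) (i : Fin n) :
    esv w (fun S P => v S P + u S P) i = esv w v i + esv w u i := by
  unfold esv
  rw [← mul_add]
  congr 1
  rw [← Finset.sum_add_distrib]
  apply Finset.sum_congr rfl
  intro σ _
  rw [← Finset.sum_add_distrib]
  apply Finset.sum_congr rfl
  intro P _
  ring

lemma mc_sub (w : Weights n) (v u : Game n) (j : Fin n) (S : Finset (Fin n))
    (P : Finset (Finset (Fin n))) :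
    mc w (fun S P => v S P - u S P) j S P = mc w v j S P - mc w u j S P := by
  unfold mc
  rw [← Finset.sum_sub_distrib]
  apply Finset.sum_congr rfl
  intro T _
  ring

lemma mc_sum (w : Weights n) {ι : Type*} (s : Finset ι) (g : ι → Game n) (j : Fin n)
    (S : Finset (Fin n)) (P : Finset (Finset (Fin n))) :
    mc w (fun S P => ∑ a ∈ s, g a S P) j S P = ∑ a ∈ s, mc w (g a) j S P := by
  unfold mc
  rw [Finset.sum_comm]
  apply Finset.sum_congr rfl
  intro T _
  rw [← Finset.sum_sub_distrib, Finset.mul_sum]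

lemma mc_smul (w : Weights n) (c : ℝ) (v : Game n) (j : Fin n) (S : Finset (Fin n))
    (P : Finset (Finset (Fin n))) :
    mc w (fun S P => c * v S P) j S P = c * mc w v j S P := by
  unfold mc
  rw [Finset.mul_sum]
  apply Finset.sum_congr rfl
  intro T _
  ring

lemma mc_sgame (w : Weights n) (hnorm : Normalized w) {S₀ S : Finset (Fin n)}
    {P₀ P : Finset (Finset (Fin n))} {j : Fin n}
    (hP : IsPartition P) (hSP : S ∈ P) (hj : j ∈ S) (hcard : S.card ≤ S₀.card) :
    mc w (sgame S₀ P₀) j S P = if S = S₀ ∧ P = P₀ then 1 else 0 := by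
  have hpos : 0 < S.card := Finset.card_pos.2 ⟨j, hj⟩
  unfold mc sgame
  have hchild : ∀ T ∈ P.erase S,
      (if S.erase j = S₀ ∧ moveTo P j T = P₀ then (1 : ℝ) else 0) = 0 := by
    intro T _
    rw [if_neg]
    rintro ⟨h1, -⟩
    have h2 := congrArg Finset.card h1
    rw [Finset.card_erase_of_mem hj] at h2
    omega
  by_cases h : S = S₀ ∧ P = P₀
  · rw [if_pos h]
    have hre : (∑ T ∈ P.erase S, w j (S.erase j) (moveTo P j T) *
          ((1 : ℝ) - if S.erase j = S₀ ∧ moveTo P j T = P₀ then 1 else 0)) =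
        ∑ T ∈ P.erase S, w j (S.erase j) (moveTo P j T) :=
      Finset.sum_congr rfl fun T hT => by rw [hchild T hT, sub_zero, mul_one]
    rw [hre]
    exact hnorm j S P hP hSP hj
  · rw [if_neg h]
    apply Finset.sum_eq_zero
    intro T hT
    rw [hchild T hT]
    ring

end PartI

/-- Uniqueness: any value satisfying Efficiency, Symmetry, Additivity and the
Null-Player Axiom with respect to `α`-marginality coincides with `φ^α`. -/
theorem stmt9 (n : ℕ) (w : Weights n) (hr : InRange w)
    (hsym : ∀ (π : Equiv.Perm (Fin n)) (i : Fin n) S P, i ∉ S →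
      w i S P = w (π i) (S.image π) (P.image (Finset.image π)))
    (hnorm : Normalized w)
    (φ : Game n → Fin n → ℝ)
    (heff : ∀ v, IsGame v → ∑ i : Fin n, φ v i = v Finset.univ (grandPart n))
    (hsymm : ∀ v, IsGame v → ∀ (π : Equiv.Perm (Fin n)) (i : Fin n),
      φ (permGame π v) i = φ v (π i))
    (hadd : ∀ v₁ v₂, IsGame v₁ → IsGame v₂ → ∀ i : Fin n,
      φ (fun S P => v₁ S P + v₂ S P) i = φ v₁ i + φ v₂ i)
    (hnull : ∀ v, IsGame v → ∀ i : Fin n,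
      (∀ S P, IsPartition P → S ∈ P → i ∈ S → mc w v i S P = 0) → φ v i = 0) :
    ∀ v, IsGame v → ∀ i : Fin n, φ v i = esv w v i := by
  have hφ0 : ∀ i : Fin n, φ (fun _ _ => 0) i = 0 := by
    intro i
    have h := hadd (fun _ _ => 0) (fun _ _ => 0) isGame_zero isGame_zero i
    simp only [add_zero] at h
    linarith
  have key : ∀ d r, r + d = n + 1 → ∀ v, IsGame v → ∀ j : Fin n,
      (∀ S P, IsPartition P → S ∈ P → j ∈ S → S.card < r → mc w v j S P = 0) →
      φ v j = esv w v j := by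
    intro d
    induction d with
    | zero =>
      intro r hrd v hv j hmc
      have hall : ∀ S P, IsPartition P → S ∈ P → j ∈ S → mc w v j S P = 0 := by
        intro S P hP hSP hjS
        refine hmc S P hP hSP hjS ?_
        have h2 : S.card ≤ n := le_trans (Finset.card_le_univ S) (by simp)
        omega
      rw [hnull v hv j hall, esv_null w hnorm hall]
    | succ d ih =>
      intro r hrd v hv j hmc
      have hrd' : r + 1 + d = n + 1 := by omega
      set EC : Finset (Finset (Fin n) × Finset (Finset (Fin n))) :=
        ((Finset.univ : Finset (Finset (Fin n))) ×ˢ allPartitions n).filter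
          (fun p => p.1 ∈ p.2 ∧ j ∈ p.1 ∧ p.1.card = r) with hEC
      set g : Finset (Fin n) × Finset (Finset (Fin n)) → Game n :=
        fun p S P => mc w v j p.1 p.2 * sgame p.1 p.2 S P with hgdef
      have hECmem : ∀ p ∈ EC, IsPartition p.2 ∧ p.1 ∈ p.2 ∧ j ∈ p.1 ∧ p.1.card = r := by
        intro p hp
        rw [hEC, Finset.mem_filter] at hp
        obtain ⟨hp1, hp2⟩ := hp
        rw [Finset.mem_product] at hp1
        exact ⟨mem_allPartitions.1 hp1.2, hp2⟩
      have hgGame : ∀ p ∈ EC, IsGame (g p) := by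
        intro p hp
        obtain ⟨h1, h2, h3, h4⟩ := hECmem p hp
        exact isGame_smul _ (isGame_sgame h1 h2 (Finset.ne_empty_of_mem h3))
      set u : Game n := fun S P => ∑ p ∈ EC, g p S P with hudef
      have huGame : IsGame u := isGame_sum EC g hgGame
      set v' : Game n := fun S P => v S P - u S P with hv'def
      have hv'Game : IsGame v' := isGame_sub hv huGame
      have he : (fun S P => v' S P + u S P) = v := by
        funext S P
        simp only [hv'def]
        ring
      -- marginal contribution of u at levels ≤ r
      have hmcu : ∀ S P, IsPartition P → S ∈ P → j ∈ S → S.card ≤ r →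
          mc w u j S P = (if (S, P) ∈ EC then mc w v j S P else 0) := by
        intro S P hP hSP hjS hcard
        rw [hudef]
        rw [mc_sum w EC g j S P]
        have hterm : ∀ p ∈ EC, mc w (g p) j S P =
            (if p = (S, P) then mc w v j p.1 p.2 else 0) := by
          intro p hp
          obtain ⟨h1, h2, h3, h4⟩ := hECmem p hp
          rw [hgdef]
          rw [mc_smul w _ _ j S P, mc_sgame w hnorm hP hSP hjS (by omega)]
          by_cases hps : p = (S, P)
          · subst hps
            rw [if_pos ⟨rfl, rfl⟩, if_pos rfl, mul_one]
          · rw [if_neg, if_neg hps, mul_zero]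
            rintro ⟨rfl, rfl⟩
            exact hps (Prod.ext rfl rfl)
        rw [Finset.sum_congr rfl hterm, Finset.sum_ite_eq' EC (S, P)
          (fun p => mc w v j p.1 p.2)]
      -- v' has vanishing marginals below level r+1
      have hmcv' : ∀ S P, IsPartition P → S ∈ P → j ∈ S → S.card < r + 1 →
          mc w v' j S P = 0 := by
        intro S P hP hSP hjS hcard
        rw [hv'def, mc_sub w v u j S P]
        rcases Nat.lt_or_ge S.card r with hlt | hge
        · rw [hmc S P hP hSP hjS hlt, hmcu S P hP hSP hjS (by omega), if_neg, sub_zero]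
          intro hmem
          exact absurd (hECmem _ hmem).2.2.2 (by simp; omega)
        · have hcr : S.card = r := by omega
          rw [hmcu S P hP hSP hjS (by omega), if_pos, sub_self]
          rw [hEC, Finset.mem_filter, Finset.mem_product]
          exact ⟨⟨Finset.mem_univ S, mem_allPartitions.2 hP⟩, hSP, hjS, hcr⟩
      -- decomposition of φ and esv
      have hφsplit : φ v j = φ v' j + φ u j := by
        have h := hadd v' u hv'Game huGame j
        rw [he] at h
        exact h
      have hesvsplit : esv w v j = esv w v' j + esv w u j := by
        have h := esv_add w v' u j
        rw [he] at h
        exact h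
      -- each basis piece
      have hper : ∀ p ∈ EC, φ (g p) j = esv w (g p) j := by
        intro p hp
        obtain ⟨S₀, P₀⟩ := p
        obtain ⟨hP₀, hS₀P₀, hjS₀, hcard₀⟩ := hECmem (S₀, P₀) hp
        dsimp only at hP₀ hS₀P₀ hjS₀ hcard₀
        have hne : S₀ ≠ ∅ := Finset.ne_empty_of_mem hjS₀
        have hgame : IsGame (g (S₀, P₀)) := hgGame _ hp
        -- (A) players outside S₀
        have hA : ∀ k : Fin n, k ∉ S₀ → φ (g (S₀, P₀)) k = esv w (g (S₀, P₀)) k := by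
          intro k hk
          apply ih (r + 1) hrd' _ hgame k
          intro S P hP hSP hkS hcardS
          rw [hgdef]
          dsimp only
          rw [mc_smul w _ _ k S P, mc_sgame w hnorm hP hSP hkS (by omega), if_neg, mul_zero]
          rintro ⟨rfl, -⟩
          exact hk hkS
        -- (B) symmetry inside S₀
        have hB : ∀ k ∈ S₀, φ (g (S₀, P₀)) k = φ (g (S₀, P₀)) j ∧
            esv w (g (S₀, P₀)) k = esv w (g (S₀, P₀)) j := by
          intro k hkS₀
          set π : Equiv.Perm (Fin n) := Equiv.swap j k with hπ
          have himg : S₀.image π = S₀ := by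
            ext a
            rw [mem_image_perm]
            rw [hπ, Equiv.symm_swap]
            rcases eq_or_ne a j with rfl | haj
            · rw [Equiv.swap_apply_left]
              exact ⟨fun _ => hjS₀, fun _ => hkS₀⟩
            · rcases eq_or_ne a k with rfl | hak
              · rw [Equiv.swap_apply_right]
                exact ⟨fun _ => hkS₀, fun _ => hjS₀⟩
              · rw [Equiv.swap_apply_of_ne_of_ne haj hak]
          have himgP : P₀.image (Finset.image π) = P₀ := by
            have hblock : ∀ B ∈ P₀, B.image π = B := by
              intro B hB
              by_cases hBS : B = S₀
              · subst hBS; exact himg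
              · have hjB : j ∉ B := notMem_of_ne_block hP₀ hS₀P₀ hjS₀ hB hBS
                have hkB : k ∉ B := notMem_of_ne_block hP₀ hS₀P₀ hkS₀ hB hBS
                ext a
                rw [mem_image_perm, hπ, Equiv.symm_swap]
                rcases eq_or_ne a j with rfl | haj
                · rw [Equiv.swap_apply_left]
                  exact ⟨fun h => absurd h hkB, fun h => absurd h hjB⟩
                · rcases eq_or_ne a k with rfl | hak
                  · rw [Equiv.swap_apply_right]
                    exact ⟨fun h => absurd h hjB, fun h => absurd h hkB⟩
                  · rw [Equiv.swap_apply_of_ne_of_ne haj hak]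
            calc P₀.image (Finset.image π) = P₀.image id :=
                  Finset.image_congr (fun B hB => hblock B hB)
              _ = P₀ := Finset.image_id
          have hperm : permGame π (g (S₀, P₀)) = g (S₀, P₀) := by
            funext S P
            show mc w v j S₀ P₀ * sgame S₀ P₀ (S.image π) (P.image (Finset.image π)) =
              mc w v j S₀ P₀ * sgame S₀ P₀ S P
            congr 1
            unfold sgame
            have hiff : (S.image π = S₀ ∧ P.image (Finset.image π) = P₀) ↔
                (S = S₀ ∧ P = P₀) := by
              constructor
              · rintro ⟨h1, h2⟩
                refine ⟨Finset.image_injective (Equiv.injective π) (h1.trans himg.symm), ?_⟩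
                exact Finset.image_injective (Finset.image_injective (Equiv.injective π))
                  (h2.trans himgP.symm)
              · rintro ⟨rfl, rfl⟩
                exact ⟨himg, himgP⟩
            rw [if_congr hiff rfl rfl]
          have hπj : π j = k := Equiv.swap_apply_left j k
          constructor
          · have h := hsymm (g (S₀, P₀)) hgame π j
            rw [hperm, hπj] at h
            exact h.symm
          · have h := esv_symm w hsym π (g (S₀, P₀)) j
            rw [hperm, hπj] at h
            exact h.symm
        -- (C) efficiency
        have hsum : ∑ k : Fin n, (φ (g (S₀, P₀)) k - esv w (g (S₀, P₀)) k) = 0 := by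
          rw [Finset.sum_sub_distrib, heff _ hgame, esv_eff w hnorm hgame, sub_self]
        have hsub : ∑ k : Fin n, (φ (g (S₀, P₀)) k - esv w (g (S₀, P₀)) k) =
            ∑ k ∈ S₀, (φ (g (S₀, P₀)) k - esv w (g (S₀, P₀)) k) := by
          symm
          apply Finset.sum_subset (Finset.subset_univ S₀)
          intro k _ hk
          rw [hA k hk, sub_self]
        have hconst : ∑ k ∈ S₀, (φ (g (S₀, P₀)) k - esv w (g (S₀, P₀)) k) =
            S₀.card • (φ (g (S₀, P₀)) j - esv w (g (S₀, P₀)) j) := by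
          rw [← Finset.sum_const]
          apply Finset.sum_congr rfl
          intro k hk
          rw [(hB k hk).1, (hB k hk).2]
        have hcardpos : 0 < S₀.card := Finset.card_pos.2 ⟨j, hjS₀⟩
        have : S₀.card • (φ (g (S₀, P₀)) j - esv w (g (S₀, P₀)) j) = 0 := by
          rw [← hconst, ← hsub, hsum]
        rw [nsmul_eq_mul] at this
        have h2 : φ (g (S₀, P₀)) j - esv w (g (S₀, P₀)) j = 0 := by
          have hc : (S₀.card : ℝ) ≠ 0 := by
            simp only [ne_eq, Nat.cast_eq_zero]
            omega
          exact (mul_eq_zero.1 this).resolve_left hc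
        linarith
      -- assemble
      have hφu : φ u j = ∑ p ∈ EC, φ (g p) j :=
        additive_sum (fun v => φ v j) (hφ0 j) (fun a b ha hb => hadd a b ha hb j) EC g hgGame
      have hesvu : esv w u j = ∑ p ∈ EC, esv w (g p) j :=
        additive_sum (fun v => esv w v j) (esv_zero w j)
          (fun a b _ _ => esv_add w a b j) EC g hgGame
      rw [hφsplit, hesvsplit, ih (r + 1) hrd' v' hv'Game j hmcv', hφu, hesvu,
        Finset.sum_congr rfl hper]
  intro v hv i
  refine key n 1 (by omega) v hv i ?_
  intro S P hP hSP hiS hcard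
  have : 0 < S.card := Finset.card_pos.2 ⟨i, hiS⟩
  omega
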